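/- (Theorem 3.7, convergence of QSAI.) Let A be an m×n matrix over the real quaternions and let A† be an n×m quaternion matrix satisfying the four Penrose equations. Fix a real scalar α and define the order-10 hyperpower sequence X₀ = α • Aᴴ, X_{j+1} = X_j · (∑_{s=0}^{9} (I − A·X_j)^s). If the initial residual satisfies ‖A·X₀ − A·A†‖ < 1 in the L∞ operator norm on quaternion matrices, then the sequence X_j converges to A† (Tendsto X_j atTop (nhds A†)). -/

import Mathlib

open Matrix Finset Quaternion Filter

attribute [local instance] Matrix.linftyOpNormedAddCommGroup

/-- Theorem 3.7 (convergence of QSAI): if the initial residual satisfies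
`‖A·X₀ − A·A†‖ < 1` in the L∞ operator norm, then the order-10 hyperpower
iterates converge to the Moore–Penrose inverse `A†`. -/
theorem qsai_convergence
    {m n : ℕ} (A : Matrix (Fin m) (Fin n) (Quaternion ℝ))
    (Adag : Matrix (Fin n) (Fin m) (Quaternion ℝ))
    (h1 : A * Adag * A = A) (h2 : Adag * A * Adag = Adag)
    (h3 : (A * Adag)ᴴ = A * Adag) (h4 : (Adag * A)ᴴ = Adag * A)
    (α : ℝ)
    (X : ℕ → Matrix (Fin n) (Fin m) (Quaternion ℝ))
    (hX0 : X 0 = α • Aᴴ)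
    (hX : ∀ j, X (j + 1) = X j * ∑ s ∈ Finset.range 10, (1 - A * X j) ^ s)
    (hres : ‖A * X 0 - A * Adag‖ < 1) :
    Tendsto X atTop (nhds Adag) := by
  set r := ‖A * X 0 - A * Adag‖ with hrdef
  have hr0 : (0 : ℝ) ≤ r := norm_nonneg _
  have hr1 : r ≤ 1 := le_of_lt hres
  set E : ℕ → Matrix (Fin m) (Fin m) (Quaternion ℝ) := fun j => A * X j - A * Adag with hE
  set B : ℕ → Matrix (Fin m) (Fin m) (Quaternion ℝ) := fun j => 1 - A * X j with hB
  have hBj : ∀ j, (1 : Matrix (Fin m) (Fin m) (Quaternion ℝ)) - A * X j = B j :=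
    fun j => rfl
  have hEj : ∀ j, A * X j - A * Adag = E j := fun j => rfl
  have h2' : Adag * (A * Adag) = Adag := by rw [← Matrix.mul_assoc, h2]
  have hPF : ∀ j, A * (Adag * (A * X j)) = A * X j := by
    intro j
    conv_lhs => rw [← Matrix.mul_assoc, ← Matrix.mul_assoc, h1]
  have hPP : A * (Adag * (A * Adag)) = A * Adag := by rw [h2']
  have hAh : Aᴴ * (A * Adag) = Aᴴ := by
    conv_lhs => rw [← h3, ← conjTranspose_mul, h1]
  have hAh' : (Adag * A) * Aᴴ = Aᴴ := by
    conv_lhs => rw [← h4, ← conjTranspose_mul, ← Matrix.mul_assoc, h1]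
  -- commutation lemma
  have comm : ∀ (Y : Matrix (Fin n) (Fin m) (Quaternion ℝ)) (s : ℕ),
      Y * (1 - A * Y) ^ s = (1 - Y * A) ^ s * Y := by
    intro Y s
    induction s with
    | zero => simp
    | succ s ih =>
      rw [pow_succ, ← Matrix.mul_assoc, ih, Matrix.mul_assoc, pow_succ,
        Matrix.mul_assoc]
      congr 1
      rw [Matrix.mul_sub, Matrix.sub_mul, Matrix.mul_one, Matrix.one_mul,
        Matrix.mul_assoc]
  -- X j * (A * Adag) = X j
  have P2 : ∀ j, X j * (A * Adag) = X j := by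
    intro j
    induction j with
    | zero => rw [hX0, Matrix.smul_mul, hAh]
    | succ j ih =>
      rw [hX j, Matrix.mul_sum, Matrix.sum_mul]
      refine Finset.sum_congr rfl fun s _ => ?_
      rw [comm, Matrix.mul_assoc, ih]
  -- Adag * (A * X j) = X j
  have P1 : ∀ j, Adag * (A * X j) = X j := by
    intro j
    induction j with
    | zero =>
      rw [hX0, Matrix.mul_smul, Matrix.mul_smul, ← Matrix.mul_assoc, hAh']
    | succ j ih =>
      rw [hX j, ← Matrix.mul_assoc, ← Matrix.mul_assoc, Matrix.mul_assoc Adag, ih]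
  -- E j * (A * Adag) = E j
  have hEP : ∀ j, E j * (A * Adag) = E j := by
    intro j
    simp only [hE, Matrix.sub_mul, Matrix.mul_assoc, P2 j, h2']
  -- (A * Adag) * B j = -(E j)
  have hPB : ∀ j, (A * Adag) * B j = -(E j) := by
    intro j
    simp only [hE, hB, Matrix.mul_sub, Matrix.mul_one, Matrix.mul_assoc,
      hPF j, neg_sub]
  -- E j * B j = -(E j * E j)
  have hEB : ∀ j, E j * B j = -(E j * E j) := by
    intro j
    have hBred : B j = (1 - A * Adag) - E j := by
      simp only [hE, hB]; abel
    rw [hBred, Matrix.mul_sub, Matrix.mul_sub, Matrix.mul_one, hEP j, sub_self,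
      zero_sub]
  -- key : (A*Adag) * (B j)^(k+1) = (-(E j))^(k+1)
  have key : ∀ j k, (A * Adag) * (B j) ^ (k + 1) = (-(E j)) ^ (k + 1) := by
    intro j k
    induction k with
    | zero => simpa using hPB j
    | succ k ih =>
      calc (A * Adag) * B j ^ (k + 1 + 1)
          = ((A * Adag) * B j ^ (k + 1)) * B j := by
            rw [pow_succ, ← Matrix.mul_assoc]
        _ = (-(E j)) ^ (k + 1) * B j := by rw [ih]
        _ = (-(E j)) ^ k * (-(E j) * B j) := by rw [pow_succ, Matrix.mul_assoc]
        _ = (-(E j)) ^ k * (E j * E j) := by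
            rw [Matrix.neg_mul, hEB j, neg_neg]
        _ = (-(E j)) ^ (k + 1 + 1) := by
            rw [pow_succ, pow_succ, Matrix.mul_assoc, neg_mul_neg]
  -- B (j+1) = (B j)^10
  have hBrec : ∀ j, B (j + 1) = (B j) ^ 10 := by
    intro j
    have hg : (B j - 1) * ∑ s ∈ Finset.range 10, (B j) ^ s = (B j) ^ 10 - 1 :=
      mul_geom_sum (B j) 10
    have h1B : A * X j = 1 - B j := by rw [← hBj j]; abel
    have hF : A * X (j + 1) = 1 - (B j) ^ 10 := by
      rw [hX j, ← Matrix.mul_assoc, hBj, h1B]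
      have hneg : (1 - B j) * ∑ s ∈ Finset.range 10, (B j) ^ s
          = -((B j - 1) * ∑ s ∈ Finset.range 10, (B j) ^ s) := by
        rw [← Matrix.neg_mul, neg_sub]
      rw [hneg, hg, neg_sub]
    rw [← hBj (j + 1), hF]
    abel
  -- E (j+1) = -(E j ^ 10)
  have hErec : ∀ j, E (j + 1) = -((E j) ^ 10) := by
    intro j
    have h10 : (-(E j)) ^ 10 = (E j) ^ 10 := by
      rw [neg_pow, Even.neg_one_pow ⟨5, rfl⟩, one_mul]
    have k10 := key j 9
    norm_num at k10
    have hfin := hPB (j + 1)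
    rw [hBrec j, k10] at hfin
    rw [hfin, neg_neg]
  -- norm bound on powers
  have npow : ∀ (M : Matrix (Fin m) (Fin m) (Quaternion ℝ)) (k : ℕ),
      ‖M ^ (k + 1)‖ ≤ ‖M‖ ^ (k + 1) := by
    intro M k
    induction k with
    | zero => simp
    | succ k ih =>
      rw [pow_succ, pow_succ]
      exact le_trans (Matrix.linfty_opNorm_mul _ _)
        (mul_le_mul_of_nonneg_right ih (norm_nonneg _))
  -- ‖E j‖ ≤ r^(j+1)
  have hnorm : ∀ j, ‖E j‖ ≤ r ^ (j + 1) := by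
    intro j
    induction j with
    | zero =>
      have hE0 : ‖E 0‖ = r := rfl
      rw [hE0, pow_one]
    | succ j ih =>
      rw [hErec j, norm_neg]
      calc ‖(E j) ^ 10‖ ≤ ‖E j‖ ^ 10 := npow (E j) 9
        _ ≤ (r ^ (j + 1)) ^ 10 := pow_le_pow_left₀ (norm_nonneg _) ih 10
        _ = r ^ (10 * (j + 1)) := by rw [← pow_mul, mul_comm]
        _ ≤ r ^ (j + 1 + 1) := pow_le_pow_of_le_one hr0 hr1 (by omega)
  -- X j - Adag = Adag * E j
  have hXE : ∀ j, X j - Adag = Adag * E j := by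
    intro j
    rw [← hEj j, Matrix.mul_sub, P1 j, h2']
  -- ‖X j - Adag‖ ≤ ‖Adag‖ * r^(j+1)
  have hle : ∀ j, ‖X j - Adag‖ ≤ ‖Adag‖ * r ^ (j + 1) := by
    intro j
    rw [hXE j]
    exact le_trans (Matrix.linfty_opNorm_mul _ _)
      (mul_le_mul_of_nonneg_left (hnorm j) (norm_nonneg _))
  rw [← tendsto_sub_nhds_zero_iff]
  apply squeeze_zero_norm hle
  have htend : Tendsto (fun j : ℕ => r ^ (j + 1)) atTop (nhds 0) :=
    (tendsto_pow_atTop_nhds_zero_of_lt_one hr0 hres).comp (tendsto_add_atTop_nat 1)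
  simpa using htend.const_mul ‖Adag‖
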